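/- The restriction of the Kirchhoff–Love system to the momentum variables (w_x, w_y, M_x, M_y, M_xy) in direction x yields a 5×5 matrix whose nonzero eigenvalues are ±√(D/I) and ±√(D(1-ν)/(2I)), with one zero eigenvalue. -/

import Mathlib

set_option maxHeartbeats 1000000
open Polynomial

theorem stmt13 (I D ν : ℝ) (hI : 0 < I) (hD : 0 < D) (hν : -1 < ν ∧ ν < 1)
    (Cx : Matrix (Fin 5) (Fin 5) ℝ)
    (hCx : Cx = !![0, 0, -1/I, 0, 0;
    0, 0, 0, 0, -1/I;
    -D, 0, 0, 0, 0;
    -D*ν, 0, 0, 0, 0;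
    0, -D*(1-ν)/2, 0, 0, 0])
    (c₃ c₄ : ℝ)
    (hc₃ : c₃ = Real.sqrt (D / I))
    (hc₄ : c₄ = Real.sqrt (D * (1 - ν) / (2 * I))) :
    ((Cx.map (fun x => (x : ℂ))).charpoly).roots =
      {(c₃ : ℂ), (-c₃ : ℂ), (c₄ : ℂ), (-c₄ : ℂ), 0} := by
  set a : ℂ := ((1/I : ℝ) : ℂ) with ha
  set b : ℂ := ((D : ℝ) : ℂ) with hb
  set c : ℂ := ((D*ν : ℝ) : ℂ) with hc
  set d : ℂ := ((D*(1-ν)/2 : ℝ) : ℂ) with hd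
  have hcm : Matrix.charmatrix (Cx.map (fun x => (x : ℂ))) =
      !![X, 0, C a, 0, 0;
         0, X, 0, 0, C a;
         C b, 0, X, 0, 0;
         C c, 0, 0, X, 0;
         0, C d, 0, 0, X] := by
    ext i j : 2
    fin_cases i <;> fin_cases j <;>
      simp [Matrix.charmatrix_apply, hCx, Matrix.map_apply, ha, hb, hc, hd,
        Matrix.vecHead, Matrix.vecTail, ← map_neg, Polynomial.C_inj] <;>
      push_cast <;> ring
  have hch : (Cx.map (fun x => (x : ℂ))).charpoly
      = X * (X^2 - C (a*b)) * (X^2 - C (a*d)) := by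
    rw [Matrix.charpoly, hcm]
    simp [Matrix.det_succ_row_zero, Fin.sum_univ_succ, map_mul, Fin.succAbove,
      Matrix.submatrix_apply, Matrix.cons_val_fin_one, Fin.castSucc,
      Fin.castAdd, Fin.castLE]
    ring
  have h3 : a * b = (c₃ : ℂ)^2 := by
    have h : c₃^2 = D / I := by
      rw [hc₃, Real.sq_sqrt (div_nonneg hD.le hI.le)]
    rw [ha, hb, ← Complex.ofReal_mul, ← Complex.ofReal_pow, h]
    congr 1; ring
  have h4 : a * d = (c₄ : ℂ)^2 := by
    have h : c₄^2 = D * (1 - ν) / (2 * I) := by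
      rw [hc₄, Real.sq_sqrt]
      exact div_nonneg (mul_nonneg hD.le (by linarith [hν.2])) (by linarith)
    rw [ha, hd, ← Complex.ofReal_mul, ← Complex.ofReal_pow, h]
    congr 1; ring
  have key : (Cx.map (fun x => (x : ℂ))).charpoly =
      (({(c₃ : ℂ), (-c₃ : ℂ), (c₄ : ℂ), (-c₄ : ℂ), 0} : Multiset ℂ).map
        (fun r => X - C r)).prod := by
    rw [hch, h3, h4]
    simp [Multiset.map_cons, Multiset.prod_cons, map_neg, map_pow]
    ring
  rw [key, Polynomial.roots_multiset_prod_X_sub_C]
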